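/- Let 1 ≤ q ≤ p ≤ n and let W_q, W_p be subspaces of ℂ^n with dim W_q = q and dim W_p = p such that pr_{q+1,p}(W_q) ⊆ W_p. Then for every k with 1 ≤ k ≤ q and all tuples L = (l_1,…,l_p), J = (j_1,…,j_q) with entries in {1,…,n}, the degenerate Plücker relation holds: ε · X_L(W_p) · X_J(W_q) = Σ X_{L'}(W_p) · X_{J'}(W_q), where ε = 1 if {j_1,…,j_k} ∩ {q+1,…,p} = ∅ and ε = 0 otherwise, the sum runs over all index tuples 1 ≤ r_1 < … < r_k ≤ p with {l_{r_1},…,l_{r_k}} ∩ {q+1,…,p} = ∅, J' = (l_{r_1},…,l_{r_k}, j_{k+1},…,j_q), and L' is obtained from L by replacing l_{r_i} with j_i for i = 1,…,k. -/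

import Mathlib

attribute [local instance] Classical.propDecidable

/-- The projection `pr_{a,b} : ℂⁿ → ℂⁿ` setting the (1-based) coordinates
`a, …, b` to zero; if `a > b` it is the identity. -/
noncomputable def pr (n a b : ℕ) : (Fin n → ℂ) →ₗ[ℂ] (Fin n → ℂ) :=
  LinearMap.pi fun i : Fin n =>
    if a ≤ (i : ℕ) + 1 ∧ (i : ℕ) + 1 ≤ b then 0 else LinearMap.proj i

/-- The `m`-th (1-based) coordinate of a vector `x ∈ ℂⁿ` (zero if `m` is out of
range). -/
noncomputable def coord {n : ℕ} (m : ℕ) (x : Fin n → ℂ) : ℂ :=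
  if h : 1 ≤ m ∧ m ≤ n then x ⟨m - 1, by omega⟩ else 0

/-- The Plücker coordinate `X_J` of the tuple `w_1, …, w_d` of vectors of `ℂⁿ`
with respect to the index tuple `J = (j_1, …, j_d)` (1-based entries): the
determinant of the `d × d` matrix whose `(s, t)` entry is the `j_s`-th
coordinate of `w_t`. -/
noncomputable def pluck {n d : ℕ} (w : Fin d → (Fin n → ℂ)) (J : Fin d → ℕ) : ℂ :=
  Matrix.det (Matrix.of fun s t : Fin d => coord (J s) (w t))

/-- The degenerate Plücker relation `R^{k;a}_{L,J}` evaluated on the pair of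
subspaces with bases `wp` (of dimension `p`) and `wq` (of dimension `q`):
`ε · X_L · X_J = Σ X_{L'} · X_{J'}`, where `ε = 1` iff
`{j_1, …, j_k} ∩ {q+1, …, p} = ∅`, the sum runs over strictly increasing tuples
`1 ≤ r_1 < … < r_k ≤ p` with `{l_{r_1}, …, l_{r_k}} ∩ {q+1, …, p} = ∅`,
`J' = (l_{r_1}, …, l_{r_k}, j_{k+1}, …, j_q)` and `L'` is obtained from `L` by
replacing `l_{r_i}` with `j_i` for `i = 1, …, k`. -/
noncomputable def DegRel (n p q k : ℕ) (hk : k ≤ q)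
    (wp : Fin p → (Fin n → ℂ)) (wq : Fin q → (Fin n → ℂ))
    (L : Fin p → ℕ) (J : Fin q → ℕ) : Prop :=
  (if ∀ i : Fin k, J (Fin.castLE hk i) ∉ Finset.Icc (q + 1) p then (1 : ℂ) else 0)
      * pluck wp L * pluck wq J =
    ∑ r : Fin k → Fin p,
      if StrictMono r ∧ ∀ i, L (r i) ∉ Finset.Icc (q + 1) p then
        pluck wp (fun s => if h : ∃ i, r i = s then J (Fin.castLE hk h.choose) else L s)
          * pluck wq (fun t => if h : (t : ℕ) < k then L (r ⟨(t : ℕ), h⟩) else J t)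
      else 0

namespace DegAux

open Matrix Finset

variable {R : Type} [CommRing R]

section Expand

variable {V : Type} [AddCommGroup V] [Module R V]

/-- Expansion of an alternating map evaluated on linear combinations of a family of
vectors, as a sum over strictly monotone index tuples of minors times values. -/
lemma alt_expand {k p : ℕ} (G : V [⋀^Fin k]→ₗ[R] R) (v : Fin p → V) (a : Fin k → Fin p → R) :
    G (fun i => ∑ s, a i s • v s) =
      ∑ r : Fin k → Fin p, if StrictMono r then
        (Matrix.det (Matrix.of fun i j : Fin k => a i (r j))) * G (v ∘ r) else 0 := by
  classical
  have h1 : G (fun i => ∑ s, a i s • v s)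
      = ∑ f : Fin k → Fin p, (∏ i, a i (f i)) * G (v ∘ f) := by
    rw [show G (fun i => ∑ s, a i s • v s)
        = G.toMultilinearMap (fun i => ∑ s, (fun i s => a i s • v s) i s) from rfl,
      MultilinearMap.map_sum]
    refine Finset.sum_congr rfl fun f _ => ?_
    simpa [smul_eq_mul, Function.comp_def] using
      G.toMultilinearMap.map_smul_univ (fun i => a i (f i)) (fun i => v (f i))
  rw [h1]
  rw [← Finset.sum_filter_of_ne (p := fun f : Fin k → Fin p => Function.Injective f)
    (fun f _ hne => by
      by_contra hinj
      obtain ⟨i, j, hfij, hij⟩ := Function.not_injective_iff.mp hinj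
      exact hne (by rw [G.map_eq_zero_of_eq (v ∘ f) (congrArg v hfij) hij, mul_zero]))]
  rw [← Finset.sum_filter (fun r : Fin k → Fin p => StrictMono r)
    (fun r => (Matrix.det (Matrix.of fun i j : Fin k => a i (r j))) * G (v ∘ r))]
  have hdet : ∀ r : Fin k → Fin p,
      (Matrix.det (Matrix.of fun i j : Fin k => a i (r j))) * G (v ∘ r)
        = ∑ σ : Equiv.Perm (Fin k),
            (((Equiv.Perm.sign σ : ℤ) : R) * ∏ i, a (σ i) (r i)) * G (v ∘ r) := by
    intro r
    rw [Matrix.det_apply', Finset.sum_mul]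
    rfl
  rw [Finset.sum_congr rfl fun r _ => hdet r, ← Finset.sum_product']
  refine (Finset.sum_bij' (fun f _ => (f ∘ Tuple.sort f, Tuple.sort f))
    (fun rσ _ => rσ.1 ∘ (Equiv.symm rσ.2)) ?_ ?_ ?_ ?_ ?_)
  · intro f hf
    rw [Finset.mem_filter] at hf
    rw [Finset.mem_product, Finset.mem_filter]
    exact ⟨⟨Finset.mem_univ _,
      (Tuple.monotone_sort f).strictMono_of_injective
        (hf.2.comp (Tuple.sort f).injective)⟩, Finset.mem_univ _⟩
  · intro rσ hrσ
    rw [Finset.mem_product, Finset.mem_filter] at hrσ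
    rw [Finset.mem_filter]
    exact ⟨Finset.mem_univ _, hrσ.1.2.injective.comp (Equiv.injective _)⟩
  · intro f hf
    funext x
    simp [Function.comp, Equiv.apply_symm_apply]
  · intro rσ hrσ
    rw [Finset.mem_product, Finset.mem_filter] at hrσ
    obtain ⟨⟨-, hsm⟩, -⟩ := hrσ
    set f := rσ.1 ∘ (Equiv.symm rσ.2) with hfdef
    have hfσ : f ∘ rσ.2 = rσ.1 := by
      funext x; simp [hfdef, Function.comp, Equiv.symm_apply_apply]
    have hmon : f ∘ Tuple.sort f = f ∘ rσ.2 :=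
      Tuple.unique_monotone (Tuple.monotone_sort f) (by rw [hfσ]; exact hsm.monotone)
    have hfinj : Function.Injective f := hsm.injective.comp (Equiv.injective _)
    have hsorteq : Tuple.sort f = rσ.2 := by
      ext x
      exact congrArg Fin.val (hfinj (congrFun hmon x))
    have h1 : f ∘ Tuple.sort f = rσ.1 := by rw [hsorteq, hfσ]
    exact Prod.ext h1 hsorteq
  · intro f hf
    rw [Finset.mem_filter] at hf
    have hf2 := hf.2
    set σ := Tuple.sort f with hσ
    have hprod : (∏ i, a (σ i) ((f ∘ σ) i)) = ∏ i, a i (f i) := by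
      rw [show (∏ i, a (σ i) ((f ∘ σ) i)) = ∏ i, (fun i => a i (f i)) (σ i) from rfl]
      exact Equiv.prod_comp σ (fun i => a i (f i))
    have hperm : G (v ∘ (f ∘ σ)) = ((Equiv.Perm.sign σ : ℤ) : R) * G (v ∘ f) := by
      rw [show v ∘ (f ∘ σ) = (v ∘ f) ∘ σ from rfl, G.map_perm (v ∘ f) σ]
      rw [Units.smul_def, zsmul_eq_mul]
    have hsign : ((Equiv.Perm.sign σ : ℤ) : R) * ((Equiv.Perm.sign σ : ℤ) : R) = 1 := by
      rcases Int.units_eq_one_or (Equiv.Perm.sign σ) with h | h <;> rw [h] <;> norm_num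
    rw [hprod, hperm, mul_mul_mul_comm, hsign, one_mul]

end Expand

end DegAux
namespace DegAux
open Matrix Finset
variable {R : Type} [CommRing R]

/-- `det` of the matrix obtained from `A` by replacing row `r i` with row `i` of `B * A`
equals the minor `det (B i (r j))` times `det A`. -/
lemma det_dite_eq_mul {p k : ℕ} (A : Matrix (Fin p) (Fin p) R) (B : Matrix (Fin k) (Fin p) R)
    (r : Fin k → Fin p) (hr : StrictMono r) :
    Matrix.det (Matrix.of fun s t => if h : ∃ i, r i = s then (B * A) h.choose t else A s t)
      = Matrix.det (Matrix.of fun i j : Fin k => B i (r j)) * A.det := by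
  classical
  have hrinj := hr.injective
  set P : Matrix (Fin p) (Fin p) R :=
    Matrix.of fun s t => if h : ∃ i, r i = s then B h.choose t
      else (1 : Matrix (Fin p) (Fin p) R) s t with hP
  have hfact : (Matrix.of fun s t => if h : ∃ i, r i = s then (B * A) h.choose t else A s t)
      = P * A := by
    ext s t
    rw [Matrix.mul_apply]
    by_cases h : ∃ i, r i = s
    · simp only [Matrix.of_apply, dif_pos h, hP, Matrix.mul_apply]
    · simp only [Matrix.of_apply, dif_neg h, hP]
      calc A s t = ((1 : Matrix (Fin p) (Fin p) R) * A) s t := by rw [Matrix.one_mul]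
        _ = ∑ u, (1 : Matrix (Fin p) (Fin p) R) s u * A u t := Matrix.mul_apply
  have hPdet : P.det = Matrix.det (Matrix.of fun i j : Fin k => B i (r j)) := by
    set sf : Finset (Fin p) := Finset.univ.image r with hsf
    have hscard : sf.card = k := by
      rw [hsf, Finset.card_image_of_injective _ hrinj, Finset.card_univ, Fintype.card_fin]
    have hccard : sfᶜ.card = p - k := by
      rw [Finset.card_compl, hscard, Fintype.card_fin]
    set c : Fin (p - k) → Fin p := fun j => ((sfᶜ.orderIsoOfFin hccard j : Fin p)) with hc
    have hcmem : ∀ j, c j ∈ sfᶜ := fun j => (sfᶜ.orderIsoOfFin hccard j).2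
    have hcnotin : ∀ j, c j ∉ sf := fun j => Finset.mem_compl.mp (hcmem j)
    have hrs : ∀ i, r i ∈ sf := fun i => Finset.mem_image_of_mem r (Finset.mem_univ i)
    have hcinj : Function.Injective c := fun i j hij => by
      have := (sfᶜ.orderIsoOfFin hccard).injective (Subtype.ext hij)
      exact this
    have hbij : Function.Bijective (Sum.elim r c) := by
      constructor
      · rintro (i | i) (j | j) hij
        · exact congrArg Sum.inl (hrinj hij)
        · exact absurd ((show r i = c j from hij) ▸ hrs i) (hcnotin j)
        · exact absurd ((show r j = c i from hij.symm) ▸ hrs j) (hcnotin i)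
        · exact congrArg Sum.inr (hcinj hij)
      · intro x
        by_cases hx : x ∈ sf
        · obtain ⟨i, -, hi⟩ := Finset.mem_image.mp hx
          exact ⟨Sum.inl i, hi⟩
        · obtain ⟨j, hj⟩ := (sfᶜ.orderIsoOfFin hccard).surjective ⟨x, Finset.mem_compl.mpr hx⟩
          exact ⟨Sum.inr j, congrArg Subtype.val hj⟩
    set e : (Fin k ⊕ Fin (p - k)) ≃ Fin p := Equiv.ofBijective _ hbij with he
    rw [← Matrix.det_submatrix_equiv_self e P]
    have hblocks : P.submatrix e e = Matrix.fromBlocks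
        (Matrix.of fun i j : Fin k => B i (r j))
        (Matrix.of fun i j => B i (c j)) 0 (1 : Matrix (Fin (p - k)) (Fin (p - k)) R) := by
      have hchoose : ∀ i : Fin k, ∀ h : ∃ i', r i' = r i, h.choose = i :=
        fun i h => hrinj h.choose_spec
      ext x y
      cases' x with i i <;> cases' y with j j <;>
        simp only [Matrix.submatrix_apply, he, Equiv.ofBijective_apply, Sum.elim_inl,
          Sum.elim_inr, hP, Matrix.of_apply, Matrix.fromBlocks_apply₁₁,
          Matrix.fromBlocks_apply₁₂, Matrix.fromBlocks_apply₂₁, Matrix.fromBlocks_apply₂₂]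
      · rw [dif_pos ⟨i, rfl⟩, hchoose i ⟨i, rfl⟩]
      · rw [dif_pos ⟨i, rfl⟩, hchoose i ⟨i, rfl⟩]
      · have hno : ¬ ∃ i', r i' = c i := fun ⟨i', hi'⟩ => hcnotin i (hi' ▸ hrs i')
        rw [dif_neg hno]
        simp only [Matrix.zero_apply]
        exact Matrix.one_apply_ne (fun hEq => hcnotin i (hEq ▸ hrs j))
      · have hno : ¬ ∃ i', r i' = c i := fun ⟨i', hi'⟩ => hcnotin i (hi' ▸ hrs i')
        rw [dif_neg hno]
        by_cases hij : i = j
        · subst hij; simp [Matrix.one_apply]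
        · rw [Matrix.one_apply_ne (fun hEq => hij (hcinj hEq)),
            Matrix.one_apply_ne hij]
    rw [hblocks, Matrix.det_fromBlocks_zero₂₁, Matrix.det_one, mul_one]
  rw [hfact, Matrix.det_mul, hPdet]

end DegAux
namespace DegAux
open Matrix Finset
variable {R : Type} [CommRing R]
variable {p q k : ℕ}

/-- The `q × q` matrix whose first `k` rows are `y i * Cm` and whose remaining rows
are given by `E`. -/
noncomputable def rowsOf (hkq : k ≤ q) (Cm : Matrix (Fin p) (Fin q) R) (E : Fin q → Fin q → R)
    (y : Fin k → Fin p → R) : Matrix (Fin q) (Fin q) R :=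
  Matrix.of fun t j => if h : (t : ℕ) < k then ∑ s, y ⟨t, h⟩ s * Cm s j else E t j

lemma rowsOf_update [DecidableEq (Fin k)] (hkq : k ≤ q) (Cm : Matrix (Fin p) (Fin q) R)
    (E : Fin q → Fin q → R) (y : Fin k → Fin p → R) (i : Fin k) (x : Fin p → R) :
    rowsOf hkq Cm E (Function.update y i x)
      = Matrix.updateRow (rowsOf hkq Cm E y) (Fin.castLE hkq i)
          (fun j => ∑ s, x s * Cm s j) := by
  have hlt : ((Fin.castLE hkq i : Fin q) : ℕ) < k := i.2
  ext t j
  by_cases hti : t = Fin.castLE hkq i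
  · subst hti
    rw [Matrix.updateRow_self]
    simp only [rowsOf, Matrix.of_apply, dif_pos hlt]
    have h1 : (⟨((Fin.castLE hkq i : Fin q) : ℕ), hlt⟩ : Fin k) = i := by
      apply Fin.ext; rfl
    rw [h1, Function.update_self]
  · rw [Matrix.updateRow_ne hti]
    by_cases h : (t : ℕ) < k
    · simp only [rowsOf, Matrix.of_apply, dif_pos h]
      have hne : (⟨(t : ℕ), h⟩ : Fin k) ≠ i := by
        intro hEq
        have hv : (t : ℕ) = (i : ℕ) := congrArg Fin.val hEq
        exact hti (Fin.val_injective hv)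
      rw [Function.update_of_ne hne]
    · simp only [rowsOf, Matrix.of_apply, dif_neg h]

/-- `y ↦ det (rowsOf hkq Cm E y)` as an alternating map. -/
noncomputable def Galt (hkq : k ≤ q) (Cm : Matrix (Fin p) (Fin q) R) (E : Fin q → Fin q → R) :
    (Fin p → R) [⋀^Fin k]→ₗ[R] R where
  toFun y := (rowsOf hkq Cm E y).det
  map_update_add' := by
    intro dec y i x₁ x₂
    have h1 : (fun j => ∑ s, (x₁ + x₂) s * Cm s j)
        = (fun j => ∑ s, x₁ s * Cm s j) + fun j => ∑ s, x₂ s * Cm s j := by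
      funext j
      simp [add_mul, Finset.sum_add_distrib]
    rw [rowsOf_update, rowsOf_update, rowsOf_update, h1, Matrix.det_updateRow_add]
  map_update_smul' := by
    intro dec y i cc x
    have h1 : (fun j => ∑ s, (cc • x) s * Cm s j)
        = cc • fun j => ∑ s, x s * Cm s j := by
      funext j
      simp [Finset.mul_sum, mul_assoc]
    rw [rowsOf_update, rowsOf_update, h1, Matrix.det_updateRow_smul, smul_eq_mul]
  map_eq_zero_of_eq' := by
    intro y i j hy hij
    refine Matrix.det_zero_of_row_eq (i := Fin.castLE hkq i) (j := Fin.castLE hkq j)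
      (fun h => hij (Fin.castLE_injective hkq h)) ?_
    funext col
    have hi : ((Fin.castLE hkq i : Fin q) : ℕ) < k := i.2
    have hj : ((Fin.castLE hkq j : Fin q) : ℕ) < k := j.2
    simp only [rowsOf, Matrix.of_apply, dif_pos hi, dif_pos hj]
    have h1 : (⟨((Fin.castLE hkq i : Fin q) : ℕ), hi⟩ : Fin k) = i := by apply Fin.ext; rfl
    have h2 : (⟨((Fin.castLE hkq j : Fin q) : ℕ), hj⟩ : Fin k) = j := by apply Fin.ext; rfl
    rw [h1, h2, hy]

noncomputable def updM (A : Matrix (Fin p) (Fin p) R) (U : Matrix (Fin k) (Fin p) R)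
    (r : Fin k → Fin p) : Matrix (Fin p) (Fin p) R :=
  Matrix.of fun s t => if h : ∃ i, r i = s then U h.choose t else A s t

noncomputable def sideL (hkq : k ≤ q) (A : Matrix (Fin p) (Fin p) R)
    (U : Matrix (Fin k) (Fin p) R) (Cm : Matrix (Fin p) (Fin q) R)
    (E : Fin q → Fin q → R) : R :=
  A.det * (rowsOf hkq Cm E (fun i => U i)).det

noncomputable def sideR (hkq : k ≤ q) (A : Matrix (Fin p) (Fin p) R)
    (U : Matrix (Fin k) (Fin p) R) (Cm : Matrix (Fin p) (Fin q) R)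
    (E : Fin q → Fin q → R) : R :=
  ∑ r : Fin k → Fin p, if StrictMono r then
    (updM A U r).det * (rowsOf hkq Cm E (fun i => A (r i))).det else 0

lemma main_field {K : Type} [Field K] {p q k : ℕ} (hkq : k ≤ q)
    (A : Matrix (Fin p) (Fin p) K) (hA : A.det ≠ 0) (U : Matrix (Fin k) (Fin p) K)
    (Cm : Matrix (Fin p) (Fin q) K) (E : Fin q → Fin q → K) :
    sideL hkq A U Cm E = sideR hkq A U Cm E := by
  classical
  set B := U * A⁻¹ with hB
  have hBA : B * A = U := by
    rw [hB, Matrix.mul_assoc, Matrix.nonsing_inv_mul A (Ne.isUnit hA), Matrix.mul_one]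
  have hU : (fun i : Fin k => (U i : Fin p → K)) = fun i => ∑ s, B i s • (A s) := by
    funext i t
    rw [Finset.sum_apply]
    simp only [Pi.smul_apply, smul_eq_mul]
    rw [← Matrix.mul_apply, hBA]
  have hG := alt_expand (Galt hkq Cm E) (fun s => A s) (fun i s => B i s)
  unfold sideL sideR
  rw [show (rowsOf hkq Cm E fun i => U i).det
      = Galt hkq Cm E (fun i => (U i : Fin p → K)) from rfl, hU, hG, Finset.mul_sum]
  refine Finset.sum_congr rfl fun r _ => ?_
  by_cases hr : StrictMono r
  · rw [if_pos hr, if_pos hr]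
    have hjac := det_dite_eq_mul A B r hr
    have hupd : updM A U r = Matrix.of fun s t =>
        if h : ∃ i, r i = s then (B * A) h.choose t else A s t := by
      rw [hBA]
      rfl
    rw [show (Galt hkq Cm E) ((fun s => A s) ∘ r)
        = (rowsOf hkq Cm E (fun i => A (r i))).det from rfl, hupd, hjac]
    ring
  · rw [if_neg hr, if_neg hr, mul_zero]

end DegAux
namespace DegAux
open Matrix Finset
variable {R S : Type} [CommRing R] [CommRing S]
variable {p q k : ℕ}

lemma rowsOf_map (f : R →+* S) (hkq : k ≤ q) (Cm : Matrix (Fin p) (Fin q) R)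
    (E : Fin q → Fin q → R) (y : Fin k → Fin p → R) :
    (rowsOf hkq Cm E y).map f
      = rowsOf hkq (Cm.map f) (fun t j => f (E t j)) (fun i s => f (y i s)) := by
  ext t j
  simp only [rowsOf, Matrix.map_apply, Matrix.of_apply]
  rw [apply_dite f]
  by_cases h : (t : ℕ) < k
  · rw [dif_pos h, dif_pos h, map_sum]
    exact Finset.sum_congr rfl fun s _ => by rw [_root_.map_mul]
  · rw [dif_neg h, dif_neg h]

lemma updM_map (f : R →+* S) (A : Matrix (Fin p) (Fin p) R) (U : Matrix (Fin k) (Fin p) R)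
    (r : Fin k → Fin p) :
    (updM A U r).map f = updM (A.map f) (U.map f) r := by
  ext s t
  simp only [updM, Matrix.map_apply, Matrix.of_apply]
  rw [apply_dite f]

lemma sideL_map (f : R →+* S) (hkq : k ≤ q) (A : Matrix (Fin p) (Fin p) R)
    (U : Matrix (Fin k) (Fin p) R) (Cm : Matrix (Fin p) (Fin q) R) (E : Fin q → Fin q → R) :
    f (sideL hkq A U Cm E)
      = sideL hkq (A.map f) (U.map f) (Cm.map f) (fun t j => f (E t j)) := by
  unfold sideL
  rw [_root_.map_mul, RingHom.map_det, RingHom.map_det, RingHom.mapMatrix_apply,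
    RingHom.mapMatrix_apply, rowsOf_map]
  rfl

lemma sideR_map (f : R →+* S) (hkq : k ≤ q) (A : Matrix (Fin p) (Fin p) R)
    (U : Matrix (Fin k) (Fin p) R) (Cm : Matrix (Fin p) (Fin q) R) (E : Fin q → Fin q → R) :
    f (sideR hkq A U Cm E)
      = sideR hkq (A.map f) (U.map f) (Cm.map f) (fun t j => f (E t j)) := by
  unfold sideR
  rw [map_sum]
  refine Finset.sum_congr rfl fun r _ => ?_
  rw [apply_ite f, map_zero, _root_.map_mul, RingHom.map_det, RingHom.map_det,
    RingHom.mapMatrix_apply, RingHom.mapMatrix_apply, rowsOf_map, updM_map]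
  rfl

lemma main_complex {p q k : ℕ} (hkq : k ≤ q) (A : Matrix (Fin p) (Fin p) ℂ)
    (U : Matrix (Fin k) (Fin p) ℂ) (Cm : Matrix (Fin p) (Fin q) ℂ) (E : Fin q → Fin q → ℂ) :
    sideL hkq A U Cm E = sideR hkq A U Cm E := by
  classical
  set Rt := Polynomial ℂ with hRt
  let K := FractionRing Rt
  let g : Rt →+* K := algebraMap Rt K
  set At : Matrix (Fin p) (Fin p) Rt := Matrix.charmatrix (-A) with hAt
  have hdet0 : At.det ≠ 0 := by
    have h1 : At.det = (-A).charpoly := rfl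
    rw [h1]
    exact (Matrix.charpoly_monic _).ne_zero
  have hginj : Function.Injective g := IsFractionRing.injective Rt K
  have hdet : (At.map g).det ≠ 0 := by
    rw [← RingHom.mapMatrix_apply, ← RingHom.map_det]
    intro h
    exact hdet0 (hginj (by rw [h, map_zero]))
  set Ut : Matrix (Fin k) (Fin p) Rt := U.map Polynomial.C with hUt
  set Cmt : Matrix (Fin p) (Fin q) Rt := Cm.map Polynomial.C with hCmt
  set Et : Fin q → Fin q → Rt := fun t j => Polynomial.C (E t j) with hEt
  have hK := main_field hkq (At.map g) hdet (Ut.map g) (Cmt.map g) (fun t j => g (Et t j))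
  rw [← sideL_map g hkq At Ut Cmt Et, ← sideR_map g hkq At Ut Cmt Et] at hK
  have hRteq := hginj hK
  have hev := congrArg (Polynomial.evalRingHom (0 : ℂ)) hRteq
  rw [sideL_map, sideR_map] at hev
  have hA0 : At.map (Polynomial.evalRingHom (0 : ℂ)) = A := by
    ext i j
    by_cases hij : i = j
    · subst hij
      simp [hAt, Matrix.charmatrix_apply_eq, Matrix.map_apply]
    · simp [hAt, Matrix.charmatrix_apply_ne _ _ _ hij, Matrix.map_apply]
  have hU0 : Ut.map (Polynomial.evalRingHom (0 : ℂ)) = U := by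
    ext i j; simp [hUt, Matrix.map_apply]
  have hCm0 : Cmt.map (Polynomial.evalRingHom (0 : ℂ)) = Cm := by
    ext i j; simp [hCmt, Matrix.map_apply]
  have hE0 : (fun t j => (Polynomial.evalRingHom (0 : ℂ)) (Et t j)) = E := by
    funext t j; simp [hEt]
  rw [hA0, hU0, hCm0, hE0] at hev
  exact hev

end DegAux
namespace DegAux

lemma pr_apply {n : ℕ} (a b : ℕ) (x : Fin n → ℂ) (i : Fin n) :
    pr n a b x i = if a ≤ (i : ℕ) + 1 ∧ (i : ℕ) + 1 ≤ b then 0 else x i := by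
  unfold pr
  rw [LinearMap.pi_apply]
  by_cases h : a ≤ (i : ℕ) + 1 ∧ (i : ℕ) + 1 ≤ b
  · rw [if_pos h, if_pos h]
    rfl
  · rw [if_neg h, if_neg h]
    rfl

lemma coord_sum {n d : ℕ} (m : ℕ) (f : Fin d → ℂ) (x : Fin d → (Fin n → ℂ)) :
    coord m (∑ s, f s • x s) = ∑ s, f s * coord m (x s) := by
  unfold coord
  by_cases hm : 1 ≤ m ∧ m ≤ n
  · simp only [dif_pos hm]
    rw [Finset.sum_apply]
    rfl
  · simp only [dif_neg hm, mul_zero, Finset.sum_const_zero]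

lemma coord_pr {n : ℕ} (a b l : ℕ) (x : Fin n → ℂ) :
    coord l (pr n a b x) = if l ∈ Finset.Icc a b then 0 else coord l x := by
  by_cases hl : 1 ≤ l ∧ l ≤ n
  · have h1 : coord l (pr n a b x) = pr n a b x ⟨l - 1, by omega⟩ := by
      unfold coord
      exact dif_pos hl
    have h2 : coord l x = x ⟨l - 1, by omega⟩ := by
      unfold coord
      exact dif_pos hl
    rw [h1, pr_apply, h2]
    have hval : ((⟨l - 1, by omega⟩ : Fin n) : ℕ) = l - 1 := rfl
    refine if_congr ?_ rfl rfl
    rw [hval, Finset.mem_Icc]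
    omega
  · have h1 : coord l (pr n a b x) = 0 := by
      unfold coord
      exact dif_neg hl
    have h2 : coord l x = 0 := by
      unfold coord
      exact dif_neg hl
    rw [h1, h2, ite_self]

end DegAux

/-- Let `1 ≤ q ≤ p ≤ n` and let `W_q, W_p ⊆ ℂⁿ` with `dim W_q = q`,
`dim W_p = p` and `pr_{q+1,p}(W_q) ⊆ W_p`. Then for every `1 ≤ k ≤ q` and all
tuples `L` of length `p` and `J` of length `q` with entries in `{1, …, n}`, the
degenerate Plücker relation `R^{k;a}_{L,J}` vanishes on `(W_p, W_q)`. -/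
theorem degenerate_plucker_relations (n p q : ℕ) (hq : 1 ≤ q) (hqp : q ≤ p) (hpn : p ≤ n)
    (Wq Wp : Submodule ℂ (Fin n → ℂ))
    (hWq : Module.finrank ℂ Wq = q) (hWp : Module.finrank ℂ Wp = p)
    (hpr : Submodule.map (pr n (q + 1) p) Wq ≤ Wp)
    (wq : Fin q → (Fin n → ℂ)) (wp : Fin p → (Fin n → ℂ))
    (hwq : LinearIndependent ℂ wq) (hwq' : Submodule.span ℂ (Set.range wq) = Wq)
    (hwp : LinearIndependent ℂ wp) (hwp' : Submodule.span ℂ (Set.range wp) = Wp)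
    (k : ℕ) (hk1 : 1 ≤ k) (hk : k ≤ q)
    (L : Fin p → ℕ) (J : Fin q → ℕ)
    (hL : ∀ a, L a ∈ Finset.Icc 1 n) (hJ : ∀ b, J b ∈ Finset.Icc 1 n) :
    DegRel n p q k hk wp wq L J := by
  classical
  have hmem : ∀ j, pr n (q + 1) p (wq j) ∈ Submodule.span ℂ (Set.range wp) := by
    intro j
    rw [hwp']
    exact hpr ⟨wq j, by rw [← hwq']; exact Submodule.subset_span ⟨j, rfl⟩, rfl⟩
  choose c hc using fun j => (Submodule.mem_span_range_iff_exists_fun ℂ).mp (hmem j)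
  set A : Matrix (Fin p) (Fin p) ℂ := Matrix.of fun s t => coord (L s) (wp t) with hA
  set U : Matrix (Fin k) (Fin p) ℂ :=
    Matrix.of fun i t => coord (J (Fin.castLE hk i)) (wp t) with hU
  set Cm : Matrix (Fin p) (Fin q) ℂ := Matrix.of fun s j => c j s with hCm
  set E : Fin q → Fin q → ℂ := fun t j => coord (J t) (wq j) with hE
  have hpsi : ∀ (l : ℕ) (j : Fin q), (∑ s, coord l (wp s) * Cm s j)
      = if l ∈ Finset.Icc (q + 1) p then 0 else coord l (wq j) := by
    intro l j
    have h1 : (∑ s, coord l (wp s) * Cm s j) = ∑ s, c j s * coord l (wp s) :=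
      Finset.sum_congr rfl fun s _ => mul_comm _ _
    rw [h1, ← DegAux.coord_sum l (c j) wp, hc j, DegAux.coord_pr]
  have key := DegAux.main_complex hk A U Cm E
  have hLHS : (if ∀ i : Fin k, J (Fin.castLE hk i) ∉ Finset.Icc (q + 1) p then (1 : ℂ) else 0)
      * pluck wp L * pluck wq J = DegAux.sideL hk A U Cm E := by
    by_cases hε : ∀ i : Fin k, J (Fin.castLE hk i) ∉ Finset.Icc (q + 1) p
    · rw [if_pos hε, one_mul]
      show pluck wp L * pluck wq J = A.det * (DegAux.rowsOf hk Cm E fun i => U i).det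
      congr 1
      unfold pluck DegAux.rowsOf
      congr 1
      ext t j
      rw [Matrix.of_apply, Matrix.of_apply]
      by_cases h : (t : ℕ) < k
      · rw [dif_pos h]
        show coord (J t) (wq j)
            = ∑ s, coord (J (Fin.castLE hk ⟨(t : ℕ), h⟩)) (wp s) * Cm s j
        rw [hpsi, if_neg (hε ⟨(t : ℕ), h⟩)]
        have hidx : Fin.castLE hk ⟨(t : ℕ), h⟩ = t := by
          apply Fin.val_injective; rfl
        rw [hidx]
      · rw [dif_neg h]
    · rw [if_neg hε, zero_mul, zero_mul]
      show (0 : ℂ) = A.det * (DegAux.rowsOf hk Cm E fun i => U i).det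
      push_neg at hε
      obtain ⟨i₀, hi₀⟩ := hε
      have hlt : ((Fin.castLE hk i₀ : Fin q) : ℕ) < k := i₀.2
      have hrow : ∀ j, DegAux.rowsOf hk Cm E (fun i => U i) (Fin.castLE hk i₀) j = 0 := by
        intro j
        show (if h : ((Fin.castLE hk i₀ : Fin q) : ℕ) < k
            then ∑ s, U ⟨((Fin.castLE hk i₀ : Fin q) : ℕ), h⟩ s * Cm s j
            else E (Fin.castLE hk i₀) j) = 0
        rw [dif_pos hlt]
        have hidx : (⟨((Fin.castLE hk i₀ : Fin q) : ℕ), hlt⟩ : Fin k) = i₀ := by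
          apply Fin.val_injective; rfl
        rw [hidx]
        show (∑ s, coord (J (Fin.castLE hk i₀)) (wp s) * Cm s j) = 0
        rw [hpsi, if_pos hi₀]
      rw [Matrix.det_eq_zero_of_row_eq_zero (Fin.castLE hk i₀) hrow, mul_zero]
  show (if ∀ i : Fin k, J (Fin.castLE hk i) ∉ Finset.Icc (q + 1) p then (1 : ℂ) else 0)
      * pluck wp L * pluck wq J = _
  rw [hLHS, key]
  unfold DegAux.sideR
  refine (Finset.sum_congr rfl fun r _ => ?_).symm
  by_cases hsm : StrictMono r
  · by_cases hQ : ∀ i, L (r i) ∉ Finset.Icc (q + 1) p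
    · rw [if_pos ⟨hsm, hQ⟩, if_pos hsm]
      congr 1
      · unfold pluck DegAux.updM
        congr 1
        ext s t
        rw [Matrix.of_apply, Matrix.of_apply, apply_dite (fun z => coord z (wp t))]
        by_cases h : ∃ i, r i = s
        · rw [dif_pos h, dif_pos h]
          rfl
        · rw [dif_neg h, dif_neg h]
          rfl
      · unfold pluck DegAux.rowsOf
        congr 1
        ext t j
        rw [Matrix.of_apply, Matrix.of_apply, apply_dite (fun z => coord z (wq j))]
        by_cases h : (t : ℕ) < k
        · rw [dif_pos h, dif_pos h]
          show coord (L (r ⟨(t : ℕ), h⟩)) (wq j)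
              = ∑ s, coord (L (r ⟨(t : ℕ), h⟩)) (wp s) * Cm s j
          rw [hpsi, if_neg (hQ ⟨(t : ℕ), h⟩)]
        · rw [dif_neg h, dif_neg h]
    · rw [if_neg (fun hand => hQ hand.2), if_pos hsm]
      push_neg at hQ
      obtain ⟨i₀, hi₀⟩ := hQ
      have hlt : ((Fin.castLE hk i₀ : Fin q) : ℕ) < k := i₀.2
      have hrow : ∀ j, DegAux.rowsOf hk Cm E (fun i => A (r i)) (Fin.castLE hk i₀) j = 0 := by
        intro j
        show (if h : ((Fin.castLE hk i₀ : Fin q) : ℕ) < k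
            then ∑ s, A (r ⟨((Fin.castLE hk i₀ : Fin q) : ℕ), h⟩) s * Cm s j
            else E (Fin.castLE hk i₀) j) = 0
        rw [dif_pos hlt]
        have hidx : (⟨((Fin.castLE hk i₀ : Fin q) : ℕ), hlt⟩ : Fin k) = i₀ := by
          apply Fin.val_injective; rfl
        rw [hidx]
        show (∑ s, coord (L (r i₀)) (wp s) * Cm s j) = 0
        rw [hpsi, if_pos hi₀]
      rw [Matrix.det_eq_zero_of_row_eq_zero (Fin.castLE hk i₀) hrow, mul_zero]
  · rw [if_neg (fun hand => hsm hand.1), if_neg hsm]
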